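/- Let {G, Γ₀, Γ₁} be a quasi boundary triple for T ⊂ S* with γ-field γ and Weyl function M. Suppose A₀ is bounded from below, M(λ) is bounded for all λ ∈ ρ(A₀), ‖\overline{M(λ)}‖ → 0 as λ → −∞, and B is a self-adjoint operator in G bounded from above satisfying: ran \overline{M(λ)}^{1/2} ⊂ dom B and B(ran \overline{M(λ)}) ⊂ ran Γ₀ for all λ < min σ(A₀), ran Γ₁ ⊂ dom B, and B(ran Γ₁) ⊂ ran Γ₀. Then A_[B] = T↾{f : Γ₀f = BΓ₁f} is self-adjoint and bounded from below. -/

import Mathlib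

open scoped InnerProductSpace


namespace Stmt9Proof

variable {E : Type*} [NormedAddCommGroup E] [InnerProductSpace ℂ E] [CompleteSpace E]

set_option linter.unusedSectionVars false
set_option linter.unusedVariables false



/-- A self-adjoint `LinearPMap` is symmetric. -/
lemma sa_symm (S : E →ₗ.[ℂ] E) (hS : IsSelfAdjoint S) :
    ∀ x y : S.domain, ⟪S x, (y : E)⟫_ℂ = ⟪(x : E), S y⟫_ℂ := by
  have hdense : Dense (S.domain : Set E) := hS.dense_domain
  have h : S.adjoint = S := hS
  obtain ⟨hdom, hval⟩ := LinearPMap.ext_iff.mp h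
  intro x y
  have hx' : (x : E) ∈ S.adjoint.domain := by rw [hdom]; exact x.2
  have hfa := LinearPMap.adjoint_isFormalAdjoint hdense (⟨(x : E), hx'⟩ : S.adjoint.domain) y
  have hv : S.adjoint ⟨(x : E), hx'⟩ = S x := @hval (x : E) hx' x.2
  rw [hv] at hfa
  exact hfa

/-- Membership and value determination for a self-adjoint operator via the inner product. -/
lemma sa_mem_and_eq (S : E →ₗ.[ℂ] E) (hS : IsSelfAdjoint S) (v w : E)
    (hvw : ∀ x : S.domain, ⟪w, (x : E)⟫_ℂ = ⟪v, S x⟫_ℂ) :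
    ∃ hv : v ∈ S.domain, S ⟨v, hv⟩ = w := by
  have hdense : Dense (S.domain : Set E) := hS.dense_domain
  have h : S.adjoint = S := hS
  obtain ⟨hdom, _⟩ := LinearPMap.ext_iff.mp h
  have hv' : v ∈ S.adjoint.domain := S.mem_adjoint_domain_of_exists v ⟨w, hvw⟩
  have hv : v ∈ S.domain := by rw [← hdom]; exact hv'
  refine ⟨hv, ?_⟩
  refine hdense.eq_of_inner_left (𝕜 := ℂ) fun z' hz => ?_
  let z : S.domain := ⟨z', hz⟩
  calc ⟪S ⟨v, hv⟩, (z : E)⟫_ℂ = ⟪v, S z⟫_ℂ := sa_symm S hS ⟨v, hv⟩ z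
  _ = ⟪w, (z : E)⟫_ℂ := (hvw z).symm

lemma re_inner_shift (S : E →ₗ.[ℂ] E) (l : ℝ) (f : S.domain) :
    (⟪S f - (l : ℂ) • (f : E), (f : E)⟫_ℂ).re = (⟪S f, (f : E)⟫_ℂ).re - l * ‖(f : E)‖ ^ 2 := by
  rw [inner_sub_left, inner_smul_left, Complex.conj_ofReal, Complex.sub_re,
    Complex.re_ofReal_mul, ← inner_self_eq_norm_sq (𝕜 := ℂ)]
  rfl



lemma shift_symm (S : E →ₗ.[ℂ] E)
    (hsym : ∀ x y : S.domain, ⟪S x, (y : E)⟫_ℂ = ⟪(x : E), S y⟫_ℂ) (l : ℝ)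
    (f g : S.domain) :
    ⟪S f - (l : ℂ) • (f : E), (g : E)⟫_ℂ = ⟪(f : E), S g - (l : ℂ) • (g : E)⟫_ℂ := by
  rw [inner_sub_left, inner_sub_right, inner_smul_left, inner_smul_right, hsym f g,
    Complex.conj_ofReal]

/-- A self-adjoint operator that is coercive after a real shift is surjective (after the shift). -/
lemma sa_coercive_surj (S : E →ₗ.[ℂ] E) (hS : IsSelfAdjoint S)
    (hsymm : ∀ x y : S.domain, ⟪S x, (y : E)⟫_ℂ = ⟪(x : E), S y⟫_ℂ)
    (hmem : ∀ v w : E, (∀ x : S.domain, ⟪w, (x : E)⟫_ℂ = ⟪v, S x⟫_ℂ) →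
      ∃ hv : v ∈ S.domain, S ⟨v, hv⟩ = w)
    (l δ : ℝ) (hδ : 0 < δ)
    (hco : ∀ f : S.domain, δ * ‖(f : E)‖ ^ 2 ≤ (⟪S f - (l : ℂ) • (f : E), (f : E)⟫_ℂ).re) :
    ∀ h : E, ∃ f : S.domain, S f - (l : ℂ) • (f : E) = h := by
  classical
  -- the shifted operator as a linear map on the domain
  set φ : S.domain →ₗ[ℂ] E := S.toFun - (Complex.ofReal l) • S.domain.subtype with hφ
  have hφap : ∀ f : S.domain, φ f = S f - (l : ℂ) • (f : E) := fun f => rfl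
  -- norm lower bound
  have hnb : ∀ f : S.domain, δ * ‖(f : E)‖ ≤ ‖φ f‖ := by
    intro f
    rcases eq_or_ne ‖(f : E)‖ 0 with h0 | h0
    · rw [h0, mul_zero]; exact norm_nonneg _
    · have h1 := hco f
      have h2 : (⟪S f - (l : ℂ) • (f : E), (f : E)⟫_ℂ).re ≤ ‖φ f‖ * ‖(f : E)‖ := by
        rw [← hφap]
        exact re_inner_le_norm (𝕜 := ℂ) _ _
      have hpos : 0 < ‖(f : E)‖ := lt_of_le_of_ne (norm_nonneg _) (Ne.symm h0)
      nlinarith [h1, h2]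
  -- the range of φ is closed
  have hclosed : IsClosed ((LinearMap.range φ : Submodule ℂ E) : Set E) := by
    refine IsSeqClosed.isClosed ?_
    intro u x hu hx
    choose g hg using hu
    -- g n : S.domain with φ (g n) = u n
    have hcau : CauchySeq (fun n => ((g n : E))) := by
      rw [Metric.cauchySeq_iff]
      intro ε hε
      have hx' : CauchySeq u := hx.cauchySeq
      rw [Metric.cauchySeq_iff] at hx'
      obtain ⟨N, hN⟩ := hx' (δ * ε) (by positivity)
      refine ⟨N, fun m hm n hn => ?_⟩
      have := hnb (g m - g n)
      have hsub : φ (g m - g n) = u m - u n := by rw [map_sub, hg, hg]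
      rw [hsub] at this
      have hd := hN m hm n hn
      rw [dist_eq_norm] at hd ⊢
      push_cast at this
      nlinarith [this, hd, norm_nonneg ((g m : E) - (g n : E))]
    obtain ⟨y, hy⟩ := cauchySeq_tendsto_of_complete hcau
    -- S (g n) = u n + l • g n converges to x + l • y
    have hSg : Filter.Tendsto (fun n => S (g n)) Filter.atTop (nhds (x + (l : ℂ) • y)) := by
      have : ∀ n, S (g n) = u n + (l : ℂ) • ((g n : E)) := by
        intro n
        have := hg n
        rw [hφap] at this
        rw [← this]; abel
      simp_rw [this]
      exact hx.add (hy.const_smul _)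
    have hmem' := hmem y (x + (l : ℂ) • y) ?_
    · obtain ⟨hy', hSy⟩ := hmem'
      refine ⟨⟨y, hy'⟩, ?_⟩
      rw [hφap, hSy]
      abel
    · intro z
      have h1 : Filter.Tendsto (fun n => ⟪S (g n), (z : E)⟫_ℂ) Filter.atTop
          (nhds ⟪x + (l : ℂ) • y, (z : E)⟫_ℂ) := by
        exact Filter.Tendsto.inner hSg tendsto_const_nhds
      have h2 : Filter.Tendsto (fun n => ⟪S (g n), (z : E)⟫_ℂ) Filter.atTop
          (nhds ⟪y, S z⟫_ℂ) := by
        have : ∀ n, ⟪S (g n), (z : E)⟫_ℂ = ⟪((g n : E)), S z⟫_ℂ := fun n => hsymm (g n) z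
        simp_rw [this]
        exact Filter.Tendsto.inner hy tendsto_const_nhds
      exact tendsto_nhds_unique h1 h2
  -- orthogonal complement of the range is trivial
  have horth : (LinearMap.range φ)ᗮ = ⊥ := by
    rw [Submodule.eq_bot_iff]
    intro v hv
    rw [Submodule.mem_orthogonal] at hv
    have hv' : ∀ f : S.domain, ⟪S f - (l : ℂ) • (f : E), v⟫_ℂ = 0 := by
      intro f
      have hm : φ f ∈ LinearMap.range φ := LinearMap.mem_range_self _ f
      have := hv _ hm
      rwa [hφap] at this
    have hkey : ∀ f : S.domain, ⟪(l : ℂ) • v, (f : E)⟫_ℂ = ⟪v, S f⟫_ℂ := by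
      intro f
      have h1 : ⟪v, S f - (l : ℂ) • (f : E)⟫_ℂ = 0 := by
        rw [← inner_conj_symm, hv' f, map_zero]
      have h2 : ⟪v, S f⟫_ℂ = (l : ℂ) * ⟪v, (f : E)⟫_ℂ := by
        rw [inner_sub_right] at h1
        have := sub_eq_zero.mp h1
        rw [this, inner_smul_right]
      rw [h2, inner_smul_left, Complex.conj_ofReal]
    obtain ⟨hvm, hSv⟩ := hmem v ((l : ℂ) • v) hkey
    have hz := hco ⟨v, hvm⟩
    rw [hSv] at hz
    have : ((l : ℂ) • v - (l : ℂ) • v : E) = 0 := by abel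
    rw [this] at hz
    simp only [inner_zero_left, Complex.zero_re] at hz
    have : ‖v‖ ^ 2 ≤ 0 := by nlinarith
    have hnv : ‖v‖ = 0 := by nlinarith [norm_nonneg v, sq_nonneg ‖v‖]
    exact norm_eq_zero.mp hnv
  -- conclude surjectivity
  intro h
  haveI : CompleteSpace (LinearMap.range φ) := hclosed.completeSpace_coe
  have htop : LinearMap.range φ = ⊤ := Submodule.orthogonal_eq_bot_iff.mp horth
  have : h ∈ LinearMap.range φ := htop ▸ Submodule.mem_top
  obtain ⟨f, hf⟩ := this
  exact ⟨f, by rw [← hφap, hf]⟩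



/-- Construct the bounded resolvent of a symmetric surjective shifted operator. -/
lemma resolvent_exists (S : E →ₗ.[ℂ] E) (l : ℝ)
    (hsymm : ∀ x y : S.domain, ⟪S x, (y : E)⟫_ℂ = ⟪(x : E), S y⟫_ℂ)
    (hsurj : ∀ h : E, ∃ f : S.domain, S f - (l : ℂ) • (f : E) = h) :
    ∃ r : E →L[ℂ] E,
      (∀ h : E, ∃ hf : r h ∈ S.domain, S ⟨r h, hf⟩ - (l : ℂ) • (r h) = h) ∧
      (∀ f : S.domain, r (S f - (l : ℂ) • (f : E)) = (f : E)) ∧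
      (∀ x y : E, ⟪r x, y⟫_ℂ = ⟪x, r y⟫_ℂ) := by
  classical
  have hshift : ∀ f g : S.domain,
      ⟪S f - (l : ℂ) • (f : E), (g : E)⟫_ℂ = ⟪(f : E), S g - (l : ℂ) • (g : E)⟫_ℂ := by
    intro f g
    rw [inner_sub_left, inner_sub_right, inner_smul_left, inner_smul_right, hsymm f g,
      Complex.conj_ofReal]
  -- injectivity
  have hinj : ∀ f : S.domain, S f - (l : ℂ) • (f : E) = 0 → (f : E) = 0 := by
    intro f hf
    have : ∀ y : E, ⟪(f : E), y⟫_ℂ = 0 := by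
      intro y
      obtain ⟨g, hg⟩ := hsurj y
      rw [← hg, ← hshift f g, hf, inner_zero_left]
    have := this (f : E)
    exact inner_self_eq_zero.mp this
  have hinj2 : ∀ f g : S.domain,
      S f - (l : ℂ) • (f : E) = S g - (l : ℂ) • (g : E) → (f : E) = (g : E) := by
    intro f g hfg
    have h0 : S (f - g) - (l : ℂ) • ((f - g : S.domain) : E) = 0 := by
      have e1 : S (f - g) - (l : ℂ) • ((f - g : S.domain) : E)
          = (S f - (l : ℂ) • (f : E)) - (S g - (l : ℂ) • (g : E)) := by
        rw [S.map_sub]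
        push_cast
        rw [smul_sub]
        abel
      rw [e1, hfg, sub_self]
    have := hinj (f - g) h0
    push_cast at this
    exact sub_eq_zero.mp this
  -- the resolvent as a bare function
  set r₀ : E → E := fun h => ((hsurj h).choose : E) with hr₀
  have hr₀spec : ∀ h : E, S (hsurj h).choose - (l : ℂ) • (((hsurj h).choose : S.domain) : E) = h :=
    fun h => (hsurj h).choose_spec
  have hr₀img : ∀ (f : S.domain) (h : E), S f - (l : ℂ) • (f : E) = h → r₀ h = (f : E) := by
    intro f h hf
    exact hinj2 _ f (by rw [hr₀spec h, hf])
  have hadd : ∀ x y : E, r₀ (x + y) = r₀ x + r₀ y := by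
    intro x y
    have hsum : S ((hsurj x).choose + (hsurj y).choose)
        - (l : ℂ) • (((hsurj x).choose + (hsurj y).choose : S.domain) : E) = x + y := by
      have e1 : S ((hsurj x).choose + (hsurj y).choose)
          - (l : ℂ) • (((hsurj x).choose + (hsurj y).choose : S.domain) : E)
          = (S (hsurj x).choose - (l : ℂ) • ((hsurj x).choose : E))
            + (S (hsurj y).choose - (l : ℂ) • ((hsurj y).choose : E)) := by
        rw [S.map_add]
        push_cast
        rw [smul_add]
        abel
      rw [e1, (hsurj x).choose_spec, (hsurj y).choose_spec]
    have := hr₀img _ _ hsum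
    push_cast at this
    rw [this]
  have hsmul : ∀ (c : ℂ) (x : E), r₀ (c • x) = c • r₀ x := by
    intro c x
    have hsm : S (c • (hsurj x).choose)
        - (l : ℂ) • ((c • (hsurj x).choose : S.domain) : E) = c • x := by
      have e1 : S (c • (hsurj x).choose)
          - (l : ℂ) • ((c • (hsurj x).choose : S.domain) : E)
          = c • (S (hsurj x).choose - (l : ℂ) • ((hsurj x).choose : E)) := by
        rw [S.map_smul]
        push_cast
        rw [smul_sub, smul_comm (l : ℂ) c]
      rw [e1, (hsurj x).choose_spec]
    have := hr₀img _ _ hsm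
    push_cast at this
    rw [this]
  set rlin : E →ₗ[ℂ] E :=
    { toFun := r₀, map_add' := hadd, map_smul' := hsmul } with hrlin
  -- symmetry of the resolvent
  have hrsym : ∀ x y : E, ⟪rlin x, y⟫_ℂ = ⟪x, rlin y⟫_ℂ := by
    intro x y
    obtain ⟨g, hg⟩ := hsurj y
    have hy : r₀ y = (g : E) := hr₀img g y hg
    have hx' : r₀ x ∈ S.domain := (hsurj x).choose.2
    calc ⟪r₀ x, y⟫_ℂ = ⟪((hsurj x).choose : E), S g - (l : ℂ) • (g : E)⟫_ℂ := by rw [← hg]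
    _ = ⟪S (hsurj x).choose - (l : ℂ) • (r₀ x), (g : E)⟫_ℂ := (hshift _ g).symm
    _ = ⟪x, (g : E)⟫_ℂ := by rw [hr₀spec x]
    _ = ⟪x, r₀ y⟫_ℂ := by rw [hy]
  have hcont : Continuous rlin := by
    have : LinearMap.IsSymmetric rlin := fun x y => hrsym x y
    exact this.continuous
  refine ⟨⟨rlin, hcont⟩, ?_, ?_, hrsym⟩
  · intro h
    exact ⟨(hsurj h).choose.2, by
      have := hr₀spec h
      convert this using 3 <;> rfl⟩
  · intro f
    exact hr₀img f _ rfl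



/-- Generalized Cauchy–Schwarz for a nonnegative symmetric bounded map. -/
lemma gen_cs (P : E →L[ℂ] E) (hsym : ∀ x y : E, ⟪P x, y⟫_ℂ = ⟪x, P y⟫_ℂ)
    (hpos : ∀ x : E, 0 ≤ (⟪P x, x⟫_ℂ).re) (C : ℝ) (hC : 0 ≤ C)
    (hCb : ∀ z : E, (⟪P z, z⟫_ℂ).re ≤ C * ‖z‖ ^ 2) :
    ∀ x : E, ‖P x‖ ^ 2 ≤ C * (⟪P x, x⟫_ℂ).re := by
  intro x
  set y := P x with hy
  rcases eq_or_ne y 0 with h0 | h0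
  · rw [h0]
    simpa using mul_nonneg hC (hpos x)
  -- quadratic in t
  have hre : ∀ z w : E, (⟪P w, z⟫_ℂ).re = (⟪P z, w⟫_ℂ).re := by
    intro z w
    have e : ⟪P w, z⟫_ℂ = (starRingEnd ℂ) ⟪P z, w⟫_ℂ := by
      rw [hsym w z]
      exact (inner_conj_symm w (P z)).symm
    rw [e, Complex.conj_re]
  have hquad : ∀ t : ℝ, 0 ≤ (⟪P y, y⟫_ℂ).re * (t * t) + (2 * (⟪P x, y⟫_ℂ).re) * t
      + (⟪P x, x⟫_ℂ).re := by
    intro t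
    have h := hpos (x + (t : ℂ) • y)
    have hexp : ⟪P (x + (t : ℂ) • y), x + (t : ℂ) • y⟫_ℂ
        = ⟪P x, x⟫_ℂ + (t : ℂ) * ⟪P x, y⟫_ℂ + (t : ℂ) * ⟪P y, x⟫_ℂ
          + (t : ℂ) * (t : ℂ) * ⟪P y, y⟫_ℂ := by
      rw [map_add, map_smul, inner_add_left, inner_add_right, inner_add_right,
        inner_smul_left, inner_smul_right, inner_smul_left, inner_smul_right,
        Complex.conj_ofReal]
      ring
    have hre2 : (⟪P (x + (t : ℂ) • y), x + (t : ℂ) • y⟫_ℂ).re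
        = (⟪P x, x⟫_ℂ).re + 2 * t * (⟪P x, y⟫_ℂ).re + t ^ 2 * (⟪P y, y⟫_ℂ).re := by
      rw [hexp]
      have := hre y x
      simp only [Complex.add_re, Complex.mul_re, Complex.mul_im, Complex.ofReal_re, Complex.ofReal_im]
      have him : (⟪P y, x⟫_ℂ).im = -(⟪P x, y⟫_ℂ).im := by
        have e : ⟪P y, x⟫_ℂ = (starRingEnd ℂ) ⟪P x, y⟫_ℂ := by
          rw [hsym y x]
          exact (inner_conj_symm y (P x)).symm
        rw [e, Complex.conj_im]
      rw [this, him]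
      simp only [← Complex.ofReal_pow, Complex.ofReal_im, Complex.ofReal_re, mul_zero, sub_zero]
      ring
    rw [hre2] at h
    nlinarith [h]
  have hdisc := discrim_le_zero hquad
  rw [discrim] at hdisc
  have hb : (⟪P x, y⟫_ℂ).re = ‖y‖ ^ 2 := by
    rw [hy, ← inner_self_eq_norm_sq (𝕜 := ℂ)]
    rfl
  have hc2 : (⟪P y, y⟫_ℂ).re ≤ C * ‖y‖ ^ 2 := hCb y
  have hny : 0 < ‖y‖ := norm_pos_iff.mpr h0
  nlinarith [hdisc, hb, hc2, hpos x, sq_nonneg ‖y‖, hny, mul_nonneg hC (hpos x)]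



set_option maxHeartbeats 1000000 in
/-- If the resolvent exists for all `l ≤ l₁` then `A` is bounded below by `l₁`. -/
lemma lower_bound (A : E →ₗ.[ℂ] E) (l₁ : ℝ)
    (hres : ∀ l : ℝ, l ≤ l₁ → ∃ r : E →L[ℂ] E,
      (∀ h : E, ∃ hf : r h ∈ A.domain, A ⟨r h, hf⟩ - (l : ℂ) • (r h) = h) ∧
      (∀ f : A.domain, r (A f - (l : ℂ) • (f : E)) = (f : E)) ∧
      (∀ x y : E, ⟪r x, y⟫_ℂ = ⟪x, r y⟫_ℂ)) :
    ∀ f : A.domain, l₁ * ‖(f : E)‖ ^ 2 ≤ (⟪A f, (f : E)⟫_ℂ).re := by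
  obtain ⟨r, hr1, hr2, hr3⟩ := hres l₁ le_rfl
  -- positivity of r
  have hpos : ∀ h : E, 0 ≤ (⟪r h, h⟫_ℂ).re := by
    by_contra hcon
    push_neg at hcon
    obtain ⟨h₀, hh₀⟩ := hcon
    have h₀ne : h₀ ≠ 0 := by
      intro h
      rw [h] at hh₀
      simp at hh₀
    have hn₀ : 0 < ‖h₀‖ := norm_pos_iff.mpr h₀ne
    set u₀ : E := ((‖h₀‖⁻¹ : ℝ) : ℂ) • h₀ with hu₀
    have hu₀norm : ‖u₀‖ = 1 := by
      rw [hu₀, norm_smul]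
      simp [abs_of_nonneg (inv_nonneg.mpr (norm_nonneg h₀))]
      field_simp
    have hscale : ∀ (a : ℝ) (h : E), (⟪r (((a : ℝ) : ℂ) • h), ((a : ℝ) : ℂ) • h⟫_ℂ).re
        = a ^ 2 * (⟪r h, h⟫_ℂ).re := by
      intro a h
      rw [map_smul, inner_smul_left, inner_smul_right, Complex.conj_ofReal, ← mul_assoc,
        ← Complex.ofReal_mul, Complex.re_ofReal_mul]
      ring
    -- the infimum of the numerical range of r on the unit sphere
    set Sset : Set ℝ := (fun h : E => (⟪r h, h⟫_ℂ).re) '' {h : E | ‖h‖ = 1} with hSset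
    have hSne : Sset.Nonempty := ⟨(⟪r u₀, u₀⟫_ℂ).re, ⟨u₀, hu₀norm, rfl⟩⟩
    have hSbdd : BddBelow Sset := by
      refine ⟨-‖r‖, fun s hs => ?_⟩
      obtain ⟨h, hh, rfl⟩ := hs
      have h1 : ‖⟪r h, h⟫_ℂ‖ ≤ ‖r‖ := by
        calc ‖⟪r h, h⟫_ℂ‖ ≤ ‖r h‖ * ‖h‖ := norm_inner_le_norm _ _
        _ ≤ (‖r‖ * ‖h‖) * ‖h‖ := by
            have := r.le_opNorm h
            nlinarith [norm_nonneg h, this]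
        _ = ‖r‖ := by rw [Set.mem_setOf_eq] at hh; rw [hh]; ring
      have h2 : |(⟪r h, h⟫_ℂ).re| ≤ ‖⟪r h, h⟫_ℂ‖ := Complex.abs_re_le_norm _
      have := abs_le.mp (le_trans h2 h1)
      linarith [this.1]
    set m : ℝ := sInf Sset with hm
    have hmneg : m < 0 := by
      have : m ≤ (⟪r u₀, u₀⟫_ℂ).re := csInf_le hSbdd ⟨u₀, hu₀norm, rfl⟩
      have hval : (⟪r u₀, u₀⟫_ℂ).re < 0 := by
        rw [hu₀, hscale]
        have : 0 < (‖h₀‖⁻¹) ^ 2 := by positivity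
        nlinarith [hh₀]
      linarith
    have hmne : m ≠ 0 := ne_of_lt hmneg
    have hm_le : ∀ h : E, m * ‖h‖ ^ 2 ≤ (⟪r h, h⟫_ℂ).re := by
      intro h
      rcases eq_or_ne h 0 with h0 | h0
      · simp [h0]
      · have hn : 0 < ‖h‖ := norm_pos_iff.mpr h0
        set u : E := ((‖h‖⁻¹ : ℝ) : ℂ) • h with hu
        have hun : ‖u‖ = 1 := by
          rw [hu, norm_smul]
          simp [abs_of_nonneg (inv_nonneg.mpr (norm_nonneg h))]
          field_simp
        have h1 : m ≤ (⟪r u, u⟫_ℂ).re := csInf_le hSbdd ⟨u, hun, rfl⟩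
        rw [hu, hscale] at h1
        have h2 : (‖h‖⁻¹) ^ 2 = (‖h‖ ^ 2)⁻¹ := by
          field_simp
        rw [h2] at h1
        have h3 : 0 < ‖h‖ ^ 2 := by positivity
        calc m * ‖h‖ ^ 2 ≤ ((‖h‖ ^ 2)⁻¹ * (⟪r h, h⟫_ℂ).re) * ‖h‖ ^ 2 := by
              exact mul_le_mul_of_nonneg_right h1 (le_of_lt h3)
        _ = (⟪r h, h⟫_ℂ).re := by field_simp
    -- the operator P = r - m
    set P : E →L[ℂ] E := r - ((m : ℂ)) • (1 : E →L[ℂ] E) with hP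
    have hPapp : ∀ x : E, P x = r x - (m : ℂ) • x := by
      intro x
      rw [hP]
      simp
    have hPsym : ∀ x y : E, ⟪P x, y⟫_ℂ = ⟪x, P y⟫_ℂ := by
      intro x y
      rw [hPapp, hPapp, inner_sub_left, inner_sub_right, inner_smul_left, inner_smul_right,
        Complex.conj_ofReal, hr3 x y]
    have hPre : ∀ x : E, (⟪P x, x⟫_ℂ).re = (⟪r x, x⟫_ℂ).re - m * ‖x‖ ^ 2 := by
      intro x
      rw [hPapp, inner_sub_left, inner_smul_left, Complex.conj_ofReal, Complex.sub_re,
        Complex.re_ofReal_mul, ← inner_self_eq_norm_sq (𝕜 := ℂ)]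
      rfl
    have hPpos : ∀ x : E, 0 ≤ (⟪P x, x⟫_ℂ).re := by
      intro x
      rw [hPre]
      linarith [hm_le x]
    set K : ℝ := ‖r‖ + |m| with hK
    have hKpos : 0 < K := by
      have : 0 < |m| := abs_pos.mpr hmne
      have := norm_nonneg r
      linarith
    have hCb : ∀ z : E, (⟪P z, z⟫_ℂ).re ≤ K * ‖z‖ ^ 2 := by
      intro z
      rw [hPre]
      have h1 : (⟪r z, z⟫_ℂ).re ≤ ‖r‖ * ‖z‖ ^ 2 := by
        have h2 : |(⟪r z, z⟫_ℂ).re| ≤ ‖⟪r z, z⟫_ℂ‖ := Complex.abs_re_le_norm _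
        have h3 : ‖⟪r z, z⟫_ℂ‖ ≤ ‖r z‖ * ‖z‖ := norm_inner_le_norm (𝕜 := ℂ) _ _
        have h4 := r.le_opNorm z
        have := abs_le.mp h2
        nlinarith [norm_nonneg z, norm_nonneg (r z)]
      have h5 : -m * ‖z‖ ^ 2 ≤ |m| * ‖z‖ ^ 2 := by
        have : -m ≤ |m| := neg_le_abs m
        nlinarith [sq_nonneg ‖z‖]
      rw [hK]
      nlinarith
    have hgcs := gen_cs P hPsym hPpos K (le_of_lt hKpos) hCb
    -- the resolvent at l := l₁ + 1/m
    have hl2 : l₁ + 1 / m ≤ l₁ := by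
      have : 1 / m < 0 := by
        exact div_neg_of_pos_of_neg one_pos hmneg
      linarith
    obtain ⟨rl, hrl1, hrl2, hrl3⟩ := hres (l₁ + 1 / m) hl2
    set Cl : ℝ := ‖rl‖ with hCl
    have hClnn : 0 ≤ Cl := norm_nonneg rl
    set e₀ : ℝ := m ^ 2 / (|m| + Cl) with he₀
    have habs : 0 < |m| := abs_pos.mpr hmne
    have he₀pos : 0 < e₀ := by
      rw [he₀]
      have : 0 < m ^ 2 := by positivity
      have : 0 < |m| + Cl := by linarith
      positivity
    set δ : ℝ := e₀ ^ 2 / K with hδ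
    have hδpos : 0 < δ := by positivity
    -- pick an approximate minimizer
    obtain ⟨s, hsmem, hslt⟩ := exists_lt_of_csInf_lt hSne (show sInf Sset < m + δ by
      rw [← hm]; linarith)
    obtain ⟨h, hh1, rfl⟩ := hsmem
    rw [Set.mem_setOf_eq] at hh1
    -- the error vector
    set ε : E := P h with hε
    have heps : ‖ε‖ ^ 2 < e₀ ^ 2 := by
      have h1 := hgcs h
      have h2 : (⟪P h, h⟫_ℂ).re = (⟪r h, h⟫_ℂ).re - m := by
        rw [hPre, hh1]; ring
      have h3 : (⟪r h, h⟫_ℂ).re - m < δ := by linarith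
      have h4 : K * (⟪P h, h⟫_ℂ).re < K * δ := by
        rcases lt_or_ge ((⟪P h, h⟫_ℂ).re) δ with hlt | hge
        · exact (mul_lt_mul_iff_right₀ hKpos).mpr (by rw [h2]; linarith)
        · exfalso; rw [h2] at hge; linarith
      have h5 : K * δ = e₀ ^ 2 := by
        rw [hδ]; field_simp
      calc ‖ε‖ ^ 2 ≤ K * (⟪P h, h⟫_ℂ).re := h1
      _ < K * δ := h4
      _ = e₀ ^ 2 := h5
    have hepslt : ‖ε‖ < e₀ := by
      nlinarith [norm_nonneg ε, he₀pos]
    -- r h is in the domain and we can apply the resolvent at l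
    obtain ⟨hfdom, hfspec⟩ := hr1 h
    set f : A.domain := ⟨r h, hfdom⟩ with hf
    -- A f - (l₁ + 1/m) f = -(1/m) • ε
    have hAf : A f - ((l₁ + 1 / m : ℝ) : ℂ) • (f : E) = -((1 / m : ℝ) : ℂ) • ε := by
      have e1 : A f - ((l₁ + 1 / m : ℝ) : ℂ) • (f : E)
          = (A f - (l₁ : ℂ) • (f : E)) - ((1 / m : ℝ) : ℂ) • (f : E) := by
        push_cast
        rw [add_smul]
        abel
      rw [e1, hfspec]
      have e2 : (f : E) = (m : ℂ) • h + ε := by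
        rw [hε, hPapp, hf]
        simp
      rw [e2, smul_add, smul_smul]
      have e3 : ((1 / m : ℝ) : ℂ) * (m : ℂ) = 1 := by
        rw [← Complex.ofReal_mul]
        rw [one_div, inv_mul_cancel₀ hmne]
        rfl
      rw [e3, one_smul]
      push_cast
      module
    have hfval : rl (A f - ((l₁ + 1 / m : ℝ) : ℂ) • (f : E)) = (f : E) := hrl2 f
    rw [hAf] at hfval
    have hnorm1 : ‖(f : E)‖ ≤ Cl * (‖ε‖ / |m|) := by
      rw [← hfval]
      calc ‖rl (-((1 / m : ℝ) : ℂ) • ε)‖ ≤ Cl * ‖-((1 / m : ℝ) : ℂ) • ε‖ := rl.le_opNorm _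
      _ = Cl * (‖ε‖ / |m|) := by
          rw [norm_smul, norm_neg, Complex.norm_real, Real.norm_eq_abs]
          rw [abs_div, abs_one]
          ring
    have hfeq : (f : E) = (m : ℂ) • h + ε := by
      rw [hε, hPapp, hf]
      simp
    have hnorm2 : |m| - ‖ε‖ ≤ ‖(f : E)‖ := by
      have h1 : ‖(m : ℂ) • h‖ = |m| := by
        rw [norm_smul, Complex.norm_real, Real.norm_eq_abs, hh1, mul_one]
      have h2 : ‖(m : ℂ) • h‖ ≤ ‖(f : E)‖ + ‖ε‖ := by
        calc ‖(m : ℂ) • h‖ = ‖(f : E) - ε‖ := by rw [hfeq]; congr 1; abel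
        _ ≤ ‖(f : E)‖ + ‖ε‖ := norm_sub_le _ _
      linarith [h1 ▸ h2]
    -- combine the two bounds: contradiction
    have hcontr : e₀ ≤ ‖ε‖ := by
      have h1 : |m| - ‖ε‖ ≤ Cl * (‖ε‖ / |m|) := le_trans hnorm2 hnorm1
      have h2 : |m| * |m| = m ^ 2 := by
        rw [← abs_mul, abs_mul_self]; ring
      rw [he₀]
      rw [div_le_iff₀ (by linarith : (0:ℝ) < |m| + Cl)]
      have h3 : (|m| - ‖ε‖) * |m| ≤ Cl * ‖ε‖ := by
        have := mul_le_mul_of_nonneg_right h1 (le_of_lt habs)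
        calc (|m| - ‖ε‖) * |m| ≤ (Cl * (‖ε‖ / |m|)) * |m| := this
        _ = Cl * ‖ε‖ := by field_simp
      nlinarith
    linarith
  -- conclude
  intro f
  have hspec := hr2 f
  have h1 : 0 ≤ (⟪r (A f - (l₁ : ℂ) • (f : E)), A f - (l₁ : ℂ) • (f : E)⟫_ℂ).re :=
    hpos _
  rw [hspec] at h1
  have h2 : (⟪(f : E), A f - (l₁ : ℂ) • (f : E)⟫_ℂ).re
      = (⟪A f, (f : E)⟫_ℂ).re - l₁ * ‖(f : E)‖ ^ 2 := by
    rw [inner_sub_right, inner_smul_right]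
    have : (⟪(f : E), A f⟫_ℂ).re = (⟪A f, (f : E)⟫_ℂ).re := by
      have e : ⟪(f : E), A f⟫_ℂ = (starRingEnd ℂ) ⟪A f, (f : E)⟫_ℂ :=
        (inner_conj_symm _ _).symm
      rw [e, Complex.conj_re]
    rw [Complex.sub_re, this]
    rw [Complex.re_ofReal_mul, ← inner_self_eq_norm_sq (𝕜 := ℂ)]
    rfl
  linarith [h1, h2.symm.le]

end Stmt9Proof

set_option maxHeartbeats 1000000 in
/-- Let `{G, Γ₀, Γ₁}` be a quasi boundary triple for `T ⊂ S*` with Weyl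
function `M`, `A₀ = T ↾ ker Γ₀` self-adjoint and bounded from below (with lower bound
`σ₀`), the values `M(λ)` bounded with closures `Mbar λ` satisfying `‖Mbar λ‖ → 0` as
`λ → −∞`, and let `B` be self-adjoint and bounded from above with
`ran (Mbar λ)^{1/2} ⊆ dom B` and `B (ran Mbar λ) ⊆ ran Γ₀` for all `λ < σ₀`,
`ran Γ₁ ⊆ dom B` and `B (ran Γ₁) ⊆ ran Γ₀`.  Then
`A_[B] = T ↾ {f : Γ₀ f = B Γ₁ f}` is self-adjoint and bounded from below. -/
theorem stmt9
    {H G : Type*}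
    [NormedAddCommGroup H] [InnerProductSpace ℂ H] [CompleteSpace H]
    [NormedAddCommGroup G] [InnerProductSpace ℂ G] [CompleteSpace G]
    (T : H →ₗ.[ℂ] H) (hTdense : Dense (T.domain : Set H))
    (Γ₀ Γ₁ : T.domain →ₗ[ℂ] G)
    -- abstract Green identity
    (hGreen : ∀ f g : T.domain,
      ⟪T f, (g : H)⟫_ℂ - ⟪(f : H), T g⟫_ℂ = ⟪Γ₁ f, Γ₀ g⟫_ℂ - ⟪Γ₀ f, Γ₁ g⟫_ℂ)
    -- (Γ₀, Γ₁) has dense range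
    (hdense : Dense (Set.range fun f : T.domain => (Γ₀ f, Γ₁ f)))
    -- A₀ = T ↾ ker Γ₀ is self-adjoint and bounded from below by σ₀
    (A₀ : H →ₗ.[ℂ] H) (hA₀sub : A₀.domain ≤ T.domain)
    (hA₀eq : ∀ f : A₀.domain, A₀ f = T ⟨f.1, hA₀sub f.2⟩)
    (hA₀dom : ∀ x (hx : x ∈ T.domain), x ∈ A₀.domain ↔ Γ₀ ⟨x, hx⟩ = 0)
    (hA₀sa : IsSelfAdjoint A₀)
    (σ₀ : ℝ)
    (hA₀lb : ∀ f : A₀.domain, σ₀ * ‖(f : H)‖ ^ 2 ≤ (⟪A₀ f, (f : H)⟫_ℂ).re)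
    -- Mbar λ is the (bounded) closure of the Weyl function M(λ) for λ < σ₀
    (Mbar : ℝ → (G →L[ℂ] G))
    (hWeyl : ∀ l : ℝ, l < σ₀ → ∀ f : T.domain,
      T f = (l : ℂ) • (f : H) → Mbar l (Γ₀ f) = Γ₁ f)
    -- (i) ‖Mbar λ‖ → 0 as λ → −∞
    (hdecay : Filter.Tendsto (fun l => ‖Mbar l‖) Filter.atBot (nhds 0))
    -- R λ = (Mbar λ)^{1/2}, the non-negative square root
    (R : ℝ → (G →L[ℂ] G))
    (hRsa : ∀ l : ℝ, l < σ₀ → IsSelfAdjoint (R l))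
    (hRnn : ∀ l : ℝ, l < σ₀ → ∀ x : G, 0 ≤ (⟪R l x, x⟫_ℂ).re)
    (hRR : ∀ l : ℝ, l < σ₀ → R l ∘L R l = Mbar l)
    -- B self-adjoint and bounded from above
    (B : G →ₗ.[ℂ] G) (hBsa : IsSelfAdjoint B)
    (hBub : ∃ c : ℝ, ∀ φ : B.domain, (⟪B φ, (φ : G)⟫_ℂ).re ≤ c * ‖(φ : G)‖ ^ 2)
    -- (ii) ran (Mbar λ)^{1/2} ⊆ dom B for all λ < σ₀
    (hranR : ∀ l : ℝ, l < σ₀ → ∀ x : G, R l x ∈ B.domain)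
    -- (iii) B (ran Mbar λ) ⊆ ran Γ₀ for all λ < σ₀
    (hBM : ∀ (l : ℝ), l < σ₀ → ∀ (x : G) (h : Mbar l x ∈ B.domain),
      B ⟨Mbar l x, h⟩ ∈ Set.range Γ₀)
    -- (iv) ran Γ₁ ⊆ dom B
    (hranΓ₁ : ∀ f : T.domain, Γ₁ f ∈ B.domain)
    -- (v) B (ran Γ₁) ⊆ ran Γ₀
    (hBΓ₁ : ∀ f : T.domain, B ⟨Γ₁ f, hranΓ₁ f⟩ ∈ Set.range Γ₀)
    -- A = A_[B] = T ↾ {f ∈ dom T : Γ₀ f = B Γ₁ f}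
    (A : H →ₗ.[ℂ] H) (hAsub : A.domain ≤ T.domain)
    (hAeq : ∀ f : A.domain, A f = T ⟨f.1, hAsub f.2⟩)
    (hAdom : ∀ x (hx : x ∈ T.domain),
      x ∈ A.domain ↔ Γ₀ ⟨x, hx⟩ = B ⟨Γ₁ ⟨x, hx⟩, hranΓ₁ ⟨x, hx⟩⟩) :
    -- conclusion: A_[B] is self-adjoint and bounded from below
    IsSelfAdjoint A ∧
      ∃ c : ℝ, ∀ f : A.domain, c * ‖(f : H)‖ ^ 2 ≤ (⟪A f, (f : H)⟫_ℂ).re := by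
  classical
  have hBsymm := Stmt9Proof.sa_symm B hBsa
  have hA₀symm := Stmt9Proof.sa_symm A₀ hA₀sa
  -- symmetry of A
  have hAsymm : ∀ f g : A.domain, ⟪A f, (g : H)⟫_ℂ = ⟪(f : H), A g⟫_ℂ := by
    intro f g
    have hf' : (f : H) ∈ T.domain := hAsub f.2
    have hg' : (g : H) ∈ T.domain := hAsub g.2
    have hG := hGreen ⟨f.1, hf'⟩ ⟨g.1, hg'⟩
    have hbf : Γ₀ (⟨f.1, hf'⟩ : T.domain)
        = B ⟨Γ₁ (⟨f.1, hf'⟩ : T.domain), hranΓ₁ _⟩ := (hAdom f.1 hf').mp f.2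
    have hbg : Γ₀ (⟨g.1, hg'⟩ : T.domain)
        = B ⟨Γ₁ (⟨g.1, hg'⟩ : T.domain), hranΓ₁ _⟩ := (hAdom g.1 hg').mp g.2
    have hB := hBsymm ⟨Γ₁ (⟨f.1, hf'⟩ : T.domain), hranΓ₁ _⟩
      ⟨Γ₁ (⟨g.1, hg'⟩ : T.domain), hranΓ₁ _⟩
    have hzero : ⟪Γ₁ (⟨f.1, hf'⟩ : T.domain), Γ₀ (⟨g.1, hg'⟩ : T.domain)⟫_ℂ
        - ⟪Γ₀ (⟨f.1, hf'⟩ : T.domain), Γ₁ (⟨g.1, hg'⟩ : T.domain)⟫_ℂ = 0 := by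
      rw [hbf, hbg, ← hB, sub_self]
    rw [hzero] at hG
    rw [hAeq f, hAeq g]
    exact sub_eq_zero.mp hG
  -- constants
  obtain ⟨c, hc⟩ := hBub
  set c' : ℝ := max c 1 with hc'def
  have hc'pos : (0 : ℝ) < c' := lt_of_lt_of_le one_pos (le_max_right _ _)
  have hcle : c ≤ c' := le_max_left _ _
  obtain ⟨N, hN⟩ : ∃ N : ℝ, ∀ l ≤ N, ‖Mbar l‖ < 1 / (2 * c') := by
    have hev : ∀ᶠ l in Filter.atBot, ‖Mbar l‖ < 1 / (2 * c') := by
      have h0 : (0 : ℝ) < 1 / (2 * c') := by positivity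
      have := hdecay.eventually (eventually_lt_nhds h0)
      exact this
    exact Filter.eventually_atBot.mp hev
  set l₁ : ℝ := min N (σ₀ - 1) with hl₁def
  have hadm : ∀ l : ℝ, l ≤ l₁ → l < σ₀ ∧ c' * ‖Mbar l‖ ≤ 1 / 2 := by
    intro l hl
    constructor
    · have : l ≤ σ₀ - 1 := le_trans hl (min_le_right _ _)
      linarith
    · have h1 : ‖Mbar l‖ < 1 / (2 * c') := hN l (le_trans hl (min_le_left _ _))
      have h2 : c' * ‖Mbar l‖ ≤ c' * (1 / (2 * c')) := by
        nlinarith [norm_nonneg (Mbar l)]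
      have h3 : c' * (1 / (2 * c')) = 1 / 2 := by field_simp
      linarith
  -- resolvent of A₀
  have hres₀ : ∀ l : ℝ, l < σ₀ → ∀ h : H, ∃ f : A₀.domain, A₀ f - (l : ℂ) • (f : H) = h := by
    intro l hl
    apply Stmt9Proof.sa_coercive_surj A₀ hA₀sa hA₀symm
      (fun v w hvw => Stmt9Proof.sa_mem_and_eq A₀ hA₀sa v w hvw) l (σ₀ - l) (by linarith)
    intro f
    rw [Stmt9Proof.re_inner_shift]
    have := hA₀lb f
    nlinarith [sq_nonneg ‖(f : H)‖]
  -- Γ₀ vanishes on A₀.domain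
  have hΓ₀zero : ∀ f : A₀.domain, Γ₀ ⟨f.1, hA₀sub f.2⟩ = 0 :=
    fun f => (hA₀dom f.1 (hA₀sub f.2)).mp f.2
  -- decomposition of dom T
  have hdec : ∀ l : ℝ, l < σ₀ → ∀ g : T.domain,
      ∃ k : T.domain, T k = (l : ℂ) • (k : H) ∧ Γ₀ k = Γ₀ g := by
    intro l hl g
    obtain ⟨f₀, hf₀⟩ := hres₀ l hl (T g - (l : ℂ) • (g : H))
    refine ⟨g - ⟨f₀.1, hA₀sub f₀.2⟩, ?_, ?_⟩
    · rw [T.map_sub, ← hA₀eq f₀]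
      have e : A₀ f₀ = T g - (l : ℂ) • (g : H) + (l : ℂ) • (f₀ : H) := by
        rw [← hf₀]; abel
      rw [e]
      push_cast
      rw [smul_sub]
      abel
    · rw [map_sub, hΓ₀zero f₀, sub_zero]
  -- main surjectivity of A - l
  have hsurjA : ∀ l : ℝ, l ≤ l₁ → ∀ h : H, ∃ f : A.domain, A f - (l : ℂ) • (f : H) = h := by
    intro l hll h
    obtain ⟨hlσ, hM⟩ := hadm l hll
    have hmemR : ∀ x : G, R l x ∈ B.domain := hranR l hlσ
    have hRsym : ∀ x y : G, ⟪R l x, y⟫_ℂ = ⟪x, R l y⟫_ℂ := by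
      intro x y
      exact (hRsa l hlσ).isSymmetric x y
    have hMx : ∀ x : G, R l (R l x) = Mbar l x := by
      intro x
      have := congrArg (fun (O : G →L[ℂ] G) => O x) (hRR l hlσ)
      simpa using this
    have hBRadd : ∀ x y : G,
        B ⟨R l (x + y), hmemR _⟩ = B ⟨R l x, hmemR x⟩ + B ⟨R l y, hmemR y⟩ := by
      intro x y
      have e : (⟨R l (x + y), hmemR _⟩ : B.domain) = ⟨R l x, hmemR x⟩ + ⟨R l y, hmemR y⟩ := by
        apply Subtype.ext
        simp [map_add]
      rw [e, B.map_add]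
    have hBRsmul : ∀ (a : ℂ) (x : G),
        B ⟨R l (a • x), hmemR _⟩ = a • B ⟨R l x, hmemR x⟩ := by
      intro a x
      have e : (⟨R l (a • x), hmemR _⟩ : B.domain) = a • ⟨R l x, hmemR x⟩ := by
        apply Subtype.ext
        simp [map_smul]
      rw [e, B.map_smul]
    set Slin : G →ₗ[ℂ] G :=
      { toFun := fun x => R l (B ⟨R l x, hmemR x⟩)
        map_add' := by
          intro x y
          show R l (B ⟨R l (x + y), hmemR (x + y)⟩)
              = R l (B ⟨R l x, hmemR x⟩) + R l (B ⟨R l y, hmemR y⟩)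
          rw [hBRadd x y, map_add]
        map_smul' := by
          intro a x
          show R l (B ⟨R l (a • x), hmemR (a • x)⟩) = a • R l (B ⟨R l x, hmemR x⟩)
          rw [hBRsmul a x, map_smul] } with hSlin
    have hSapp : ∀ x : G, Slin x = R l (B ⟨R l x, hmemR x⟩) := fun x => rfl
    have hSsym : ∀ x y : G, ⟪Slin x, y⟫_ℂ = ⟪x, Slin y⟫_ℂ := by
      intro x y
      rw [hSapp, hSapp, hRsym, hBsymm ⟨R l x, hmemR x⟩ ⟨R l y, hmemR y⟩]
      exact hRsym _ _
    have hScont : Continuous Slin := LinearMap.IsSymmetric.continuous (fun x y => hSsym x y)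
    set Sc : G →L[ℂ] G := ⟨Slin, hScont⟩ with hScdef
    have hScapp : ∀ x : G, Sc x = R l (B ⟨R l x, hmemR x⟩) := fun x => rfl
    -- bound on ‖R l x‖²
    have hRsq : ∀ x : G, ‖R l x‖ ^ 2 ≤ ‖Mbar l‖ * ‖x‖ ^ 2 := by
      intro x
      have h1 : (‖R l x‖ : ℝ) ^ 2 = (⟪R l x, R l x⟫_ℂ).re := by
        rw [← inner_self_eq_norm_sq (𝕜 := ℂ)]
        rfl
      have h2 : (⟪R l x, R l x⟫_ℂ) = ⟪x, Mbar l x⟫_ℂ := by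
        rw [hRsym x (R l x), hMx x]
      have h3 : (⟪x, Mbar l x⟫_ℂ).re ≤ ‖x‖ * (‖Mbar l‖ * ‖x‖) := by
        have a1 : (⟪x, Mbar l x⟫_ℂ).re ≤ ‖⟪x, Mbar l x⟫_ℂ‖ := by
          exact Complex.re_le_norm _
        have a2 : ‖⟪x, Mbar l x⟫_ℂ‖ ≤ ‖x‖ * ‖Mbar l x‖ := norm_inner_le_norm (𝕜 := ℂ) _ _
        have a3 : ‖Mbar l x‖ ≤ ‖Mbar l‖ * ‖x‖ := (Mbar l).le_opNorm x
        nlinarith [norm_nonneg x]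
      rw [h2] at h1
      nlinarith [h1, h3]
    -- coercivity of 1 - Sc
    have hco : ∀ x : G, (1 / 2 : ℝ) * ‖x‖ ^ 2
        ≤ (⟪((1 : G →L[ℂ] G) - Sc) x, x⟫_ℂ).re := by
      intro x
      have hSx : (⟪Sc x, x⟫_ℂ).re ≤ c' * (‖Mbar l‖ * ‖x‖ ^ 2) := by
        have h1 : (⟪Sc x, x⟫_ℂ).re = (⟪B ⟨R l x, hmemR x⟩, R l x⟫_ℂ).re := by
          rw [hScapp, hRsym _ x]
        have h2 := hc ⟨R l x, hmemR x⟩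
        have h3 := hRsq x
        rw [h1]
        calc (⟪B ⟨R l x, hmemR x⟩, R l x⟫_ℂ).re ≤ c * ‖R l x‖ ^ 2 := h2
        _ ≤ c' * ‖R l x‖ ^ 2 := by nlinarith [sq_nonneg ‖R l x‖]
        _ ≤ c' * (‖Mbar l‖ * ‖x‖ ^ 2) := by nlinarith [hc'pos]
      have h4 : c' * (‖Mbar l‖ * ‖x‖ ^ 2) ≤ (1 / 2) * ‖x‖ ^ 2 := by
        nlinarith [sq_nonneg ‖x‖, hM]
      have h5 : (⟪((1 : G →L[ℂ] G) - Sc) x, x⟫_ℂ).re = ‖x‖ ^ 2 - (⟪Sc x, x⟫_ℂ).re := by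
        have e : ((1 : G →L[ℂ] G) - Sc) x = x - Sc x := by
          simp [ContinuousLinearMap.sub_apply]
        rw [e, inner_sub_left, Complex.sub_re, ← inner_self_eq_norm_sq (𝕜 := ℂ)]
        rfl
      rw [h5]
      linarith
    -- (1 - Sc) is surjective
    have hunit : IsUnit ((1 : G →L[ℂ] G) - Sc) := by
      apply ContinuousLinearMap.isUnit_of_forall_le_norm_inner_map _
        (c := (1/2 : NNReal)) (by norm_num)
      intro x
      have h1 := hco x
      have h2 : (⟪((1 : G →L[ℂ] G) - Sc) x, x⟫_ℂ).re
          ≤ ‖⟪((1 : G →L[ℂ] G) - Sc) x, x⟫_ℂ‖ := by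
        exact Complex.re_le_norm _
      have h3 : (‖x‖ ^ 2 * ((1/2 : NNReal) : ℝ) : ℝ) = (1/2) * ‖x‖ ^ 2 := by
        norm_num
        ring
      calc (‖x‖ ^ 2 * ((1/2 : NNReal) : ℝ) : ℝ) = (1/2) * ‖x‖ ^ 2 := h3
      _ ≤ (⟪((1 : G →L[ℂ] G) - Sc) x, x⟫_ℂ).re := h1
      _ ≤ ‖⟪((1 : G →L[ℂ] G) - Sc) x, x⟫_ℂ‖ := h2
    have hPsurj : Function.Surjective ((1 : G →L[ℂ] G) - Sc) :=
      (ContinuousLinearMap.isUnit_iff_bijective.mp hunit).2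
    -- solve the boundary equation
    obtain ⟨f₀, hf₀⟩ := hres₀ l hlσ h
    have hΓ₀f₀ : Γ₀ (⟨f₀.1, hA₀sub f₀.2⟩ : T.domain) = 0 := hΓ₀zero f₀
    set b : G := B ⟨Γ₁ (⟨f₀.1, hA₀sub f₀.2⟩ : T.domain), hranΓ₁ _⟩ with hbdef
    obtain ⟨w, hw⟩ := hPsurj (R l b)
    have hw' : w - R l (B ⟨R l w, hmemR w⟩) = R l b := by
      have e : ((1 : G →L[ℂ] G) - Sc) w = w - R l (B ⟨R l w, hmemR w⟩) := by
        simp [ContinuousLinearMap.sub_apply, hScapp]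
      rw [← e, hw]
    set x : G := b + B ⟨R l w, hmemR w⟩ with hxdef
    have hRx : R l x = w := by
      rw [hxdef, map_add]
      have e : R l b = w - R l (B ⟨R l w, hmemR w⟩) := hw'.symm
      rw [e]
      abel
    have hdmx : Mbar l x ∈ B.domain := by
      rw [← hMx x]
      exact hmemR (R l x)
    have hBMx : B ⟨Mbar l x, hdmx⟩ = B ⟨R l w, hmemR w⟩ := by
      have e : (⟨Mbar l x, hdmx⟩ : B.domain) = ⟨R l w, hmemR w⟩ := by
        apply Subtype.ext
        show Mbar l x = R l w
        rw [← hMx x, hRx]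
      rw [e]
    have hxran : x ∈ Set.range Γ₀ := by
      obtain ⟨g1, hg1⟩ := hBΓ₁ (⟨f₀.1, hA₀sub f₀.2⟩ : T.domain)
      obtain ⟨g2, hg2⟩ := hBM l hlσ x hdmx
      refine ⟨g1 + g2, ?_⟩
      rw [map_add, hg1, hg2, hBMx, hxdef]
    obtain ⟨g, hg⟩ := hxran
    obtain ⟨k, hk1, hk2⟩ := hdec l hlσ g
    have hΓ₀k : Γ₀ k = x := by rw [hk2, hg]
    have hΓ₁k : Γ₁ k = Mbar l x := by rw [← hWeyl l hlσ k hk1, hΓ₀k]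
    set fT : T.domain := ⟨f₀.1, hA₀sub f₀.2⟩ + k with hfTdef
    have hTf : T fT = (l : ℂ) • (fT : H) + h := by
      rw [hfTdef, T.map_add, ← hA₀eq f₀, hk1]
      have e : A₀ f₀ = (l : ℂ) • (f₀ : H) + h := by
        rw [← hf₀]
        abel
      rw [e]
      push_cast
      rw [smul_add]
      abel
    have hΓ₀f : Γ₀ fT = x := by rw [hfTdef, map_add, hΓ₀f₀, hΓ₀k, zero_add]
    have hΓ₁f : Γ₁ fT = Γ₁ (⟨f₀.1, hA₀sub f₀.2⟩ : T.domain) + Mbar l x := by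
      rw [hfTdef, map_add, hΓ₁k]
    have hBf : B ⟨Γ₁ fT, hranΓ₁ fT⟩ = x := by
      have e : (⟨Γ₁ fT, hranΓ₁ fT⟩ : B.domain)
          = ⟨Γ₁ (⟨f₀.1, hA₀sub f₀.2⟩ : T.domain), hranΓ₁ _⟩ + ⟨Mbar l x, hdmx⟩ := by
        apply Subtype.ext
        show Γ₁ fT = Γ₁ (⟨f₀.1, hA₀sub f₀.2⟩ : T.domain) + Mbar l x
        exact hΓ₁f
      rw [e, B.map_add, hBMx, hxdef]
    have hfA : (fT : H) ∈ A.domain := by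
      rw [hAdom (fT : H) fT.2]
      show Γ₀ fT = B ⟨Γ₁ fT, hranΓ₁ fT⟩
      rw [hΓ₀f, hBf]
    refine ⟨⟨(fT : H), hfA⟩, ?_⟩
    rw [hAeq ⟨(fT : H), hfA⟩]
    have e : (⟨(⟨(fT : H), hfA⟩ : A.domain).1, hAsub hfA⟩ : T.domain) = fT := Subtype.ext rfl
    rw [e, hTf]
    show (l : ℂ) • (fT : H) + h - (l : ℂ) • (fT : H) = h
    abel
  -- resolvents of A
  have hresA : ∀ l : ℝ, l ≤ l₁ → ∃ r : H →L[ℂ] H,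
      (∀ h : H, ∃ hf : r h ∈ A.domain, A ⟨r h, hf⟩ - (l : ℂ) • (r h) = h) ∧
      (∀ f : A.domain, r (A f - (l : ℂ) • (f : H)) = (f : H)) ∧
      (∀ x y : H, ⟪r x, y⟫_ℂ = ⟪x, r y⟫_ℂ) :=
    fun l hl => Stmt9Proof.resolvent_exists A l hAsymm (hsurjA l hl)
  -- injectivity-type fact: elements orthogonal to all (A - l) images vanish
  have hperp : ∀ l : ℝ, l ≤ l₁ → ∀ v : H,
      (∀ g : A.domain, ⟪v, A g - (l : ℂ) • (g : H)⟫_ℂ = 0) → v = 0 := by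
    intro l hl v hv
    have h1 : ∀ y : H, ⟪v, y⟫_ℂ = 0 := by
      intro y
      obtain ⟨g, hg⟩ := hsurjA l hl y
      rw [← hg]
      exact hv g
    exact inner_self_eq_zero.mp (h1 v)
  -- dense domain of A
  have hdomA : Dense (A.domain : Set H) := by
    rw [Submodule.dense_iff_topologicalClosure_eq_top,
      Submodule.topologicalClosure_eq_top_iff, Submodule.eq_bot_iff]
    intro v hv
    rw [Submodule.mem_orthogonal] at hv
    obtain ⟨f, hf⟩ := hsurjA l₁ le_rfl v
    have h1 : ∀ g : A.domain, ⟪A f - (l₁ : ℂ) • (f : H), (g : H)⟫_ℂ = 0 := by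
      intro g
      rw [hf]
      have := hv (g : H) g.2
      rw [← inner_conj_symm, this, map_zero]
    have h2 : ∀ g : A.domain, ⟪(f : H), A g - (l₁ : ℂ) • (g : H)⟫_ℂ = 0 := by
      intro g
      rw [← Stmt9Proof.shift_symm A hAsymm l₁ f g]
      exact h1 g
    have h3 : (f : H) = 0 := hperp l₁ le_rfl (f : H) h2
    have h4 : f = 0 := by
      exact Subtype.ext h3
    rw [← hf, h4]
    simp
  -- self-adjointness
  have hsa : IsSelfAdjoint A := by
    rw [LinearPMap.isSelfAdjoint_def]
    have hdomeq : A.adjoint.domain = A.domain := by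
      apply le_antisymm
      · intro g hg
        have hfa := LinearPMap.adjoint_isFormalAdjoint hdomA (⟨g, hg⟩ : A.adjoint.domain)
        set w : H := A.adjoint ⟨g, hg⟩ with hwdef
        obtain ⟨u, hu⟩ := hsurjA l₁ le_rfl (w - (l₁ : ℂ) • g)
        have h1 : ∀ y : A.domain, ⟪(u : H) - g, A y - (l₁ : ℂ) • (y : H)⟫_ℂ = 0 := by
          intro y
          have e1 : ⟪(u : H), A y - (l₁ : ℂ) • (y : H)⟫_ℂ
              = ⟪A u - (l₁ : ℂ) • (u : H), (y : H)⟫_ℂ :=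
            (Stmt9Proof.shift_symm A hAsymm l₁ u y).symm
          have e3 : ⟪w, (y : H)⟫_ℂ = ⟪g, A y⟫_ℂ := hfa y
          rw [inner_sub_left, e1, hu, inner_sub_left, inner_sub_right, e3,
            inner_smul_left, inner_smul_right, Complex.conj_ofReal]
          ring
        have h2 : (u : H) - g = 0 := hperp l₁ le_rfl _ h1
        have h3 : g = (u : H) := by
          have := sub_eq_zero.mp h2
          exact this.symm
        rw [h3]
        exact u.2
      · intro g hg
        exact LinearPMap.mem_adjoint_domain_of_exists (T := A) g
          ⟨A ⟨g, hg⟩, fun y => hAsymm ⟨g, hg⟩ y⟩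
    apply LinearPMap.ext hdomeq
    intro x hx hy
    apply LinearPMap.adjoint_apply_eq hdomA ⟨x, hx⟩ (x₀ := A ⟨x, hy⟩)
    intro v
    rw [hAsymm ⟨x, hy⟩ v]
  refine ⟨hsa, l₁, Stmt9Proof.lower_bound A l₁ hresA⟩
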